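/- Let D=(V,A) be a digraph with strongly connected components C_1,…,C_k, let X ⊆ V, let J = {j : 1 ≤ j ≤ k, X∩C_j ≠ ∅}, and for each j ∈ J let X_j = (X∩C_j) ∪ ⋃{P_D^{C_i} : i ∈ J−{j}, C_i ⊆ P_D^{C_j}}. Then d_A^-(X) ≥ Σ_{j∈J} d_A^-(X_j). -/

import Mathlib

/- Common definitions for formalizing packing-of-arborescences theorems.

Conventions:
* A digraph on a finite vertex type `V` is given by a finite multiset of arcs
  `A : Multiset (V × V)`, an arc `(u, v)` having tail `u` and head `v`.
* An undirected (multi)graph is given by a multiset of edges `E : Multiset (V × V)`,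
  an edge being recorded as an (arbitrarily ordered) pair of its endpoints.
* A multiset `S` of vertices (e.g. of roots) is given by a finite index type `S`
  together with a placement map `π : S → V`; the multiplicity of a vertex `v` is
  the size of the fiber over `v`.
* A dypergraph is given by a multiset `𝒜 : Multiset (Finset V × V)` of dyperedges
  `(Z, z)` with tail set `Z` and head `z`; a hypergraph by a multiset
  `ℰ : Multiset (Finset V)` of hyperedges. -/

attribute [local instance] Classical.propDecidable

noncomputable section

namespace ArborPaper

variable {V : Type*} [Fintype V] [DecidableEq V]

/-- An arc `a = (u, v)` (tail `u`, head `v`) enters `X` if its head is in `X`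
and its tail is outside. -/
def arcEnters (a : V × V) (X : Finset V) : Prop := a.2 ∈ X ∧ a.1 ∉ X

/-- An undirected edge (given by a pair of endpoints) enters `X` if exactly one of
its endpoints is in `X`. -/
def edgeEnters (e : V × V) (X : Finset V) : Prop :=
  (e.1 ∈ X ∧ e.2 ∉ X) ∨ (e.2 ∈ X ∧ e.1 ∉ X)

/-- The in-degree `d⁻_A(X)` of a vertex set `X`. -/
def inDeg (A : Multiset (V × V)) (X : Finset V) : ℕ :=
  (A.filter fun a => arcEnters a X).card

/-- The in-degree of a single vertex. -/
def inDegV (A : Multiset (V × V)) (v : V) : ℕ :=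
  (A.filter fun a => a.2 = v).card

/-- Reachability by a directed path using the arcs of `A`. -/
def Reaches (A : Multiset (V × V)) (u v : V) : Prop :=
  Relation.ReflTransGen (fun x y => (x, y) ∈ A) u v

/-- `P_D^X` : the set of vertices from which some vertex of `X` is reachable. -/
def PD (A : Multiset (V × V)) (X : Finset V) : Finset V :=
  Finset.univ.filter fun u => ∃ v ∈ X, Reaches A u v

/-- `Q_D^X` : the set of vertices reachable from some vertex of `X`. -/
def QD (A : Multiset (V × V)) (X : Finset V) : Finset V :=
  Finset.univ.filter fun v => ∃ u ∈ X, Reaches A u v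

/-- `C` is a strongly connected component of the digraph `(V, A)`. -/
def IsSCCD (A : Multiset (V × V)) (C : Finset V) : Prop :=
  ∃ v : V, C = Finset.univ.filter fun u => Reaches A u v ∧ Reaches A v u

/-- `B` is an `s`-arborescence with vertex set `U` : all arcs lie inside `U`,
every vertex of `U` other than `s` has in-degree exactly `1`, the root has
in-degree `0`, and every vertex of `U` is reachable from `s`
(equivalently: no circuit and all in-degrees of non-root vertices equal `1`). -/
def IsArborOn (B : Multiset (V × V)) (U : Finset V) (s : V) : Prop :=
  s ∈ U ∧ (∀ a ∈ B, a.1 ∈ U ∧ a.2 ∈ U) ∧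
  (∀ v ∈ U, v ≠ s → inDegV B v = 1) ∧ inDegV B s = 0 ∧
  ∀ v ∈ U, Reaches B s v

/-- `B` is a spanning `s`-arborescence (vertex set all of `V`). -/
def IsSpanningArbor (B : Multiset (V × V)) (s : V) : Prop :=
  IsArborOn B Finset.univ s

/-- One step along a mixed graph: an arc of `A`, or an edge of `E` in either direction. -/
def MStep (E A : Multiset (V × V)) (u v : V) : Prop :=
  (u, v) ∈ A ∨ (u, v) ∈ E ∨ (v, u) ∈ E

/-- Reachability by a mixed path in the mixed graph `(V, E ∪ A)`. -/
def MReaches (E A : Multiset (V × V)) (u v : V) : Prop :=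
  Relation.ReflTransGen (MStep E A) u v

/-- `P_F^X` for a mixed graph `F = (V, E ∪ A)`. -/
def PF (E A : Multiset (V × V)) (X : Finset V) : Finset V :=
  Finset.univ.filter fun u => ∃ v ∈ X, MReaches E A u v

/-- `Q_F^X` for a mixed graph `F = (V, E ∪ A)`. -/
def QF (E A : Multiset (V × V)) (X : Finset V) : Finset V :=
  Finset.univ.filter fun v => ∃ u ∈ X, MReaches E A u v

/-- `C` is a strongly connected component of the mixed graph `(V, E ∪ A)`. -/
def IsSCC (E A : Multiset (V × V)) (C : Finset V) : Prop :=
  ∃ v : V, C = Finset.univ.filter fun u => MReaches E A u v ∧ MReaches E A v u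

/-- `e_{E∪A}(𝒫)` : the number of edges of `E` and arcs of `A` entering at least one
member of the family `P`. -/
def eMixed (E A : Multiset (V × V)) (P : Finset (Finset V)) : ℕ :=
  (E.filter fun e => ∃ X ∈ P, edgeEnters e X).card +
  (A.filter fun a => ∃ X ∈ P, arcEnters a X).card

/-- A subpartition of `V` : a set of pairwise disjoint nonempty subsets. -/
def IsSubpartition (P : Finset (Finset V)) : Prop :=
  (∀ X ∈ P, X.Nonempty) ∧ ∀ X ∈ P, ∀ Y ∈ P, X ≠ Y → Disjoint X Y

/-- `Eo` is an orientation of the multiset `E` of undirected edges: each edge is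
kept or swapped. -/
def IsOrientationOf (E Eo : Multiset (V × V)) : Prop :=
  Multiset.Rel (fun e a => a = e ∨ a = Prod.swap e) E Eo

/-- The rank function of a matroid on a finite ground type `S`. -/
structure RankFn (S : Type*) [Fintype S] [DecidableEq S] where
  r : Finset S → ℕ
  rank_le_card : ∀ X : Finset S, r X ≤ X.card
  mono : ∀ ⦃X Y : Finset S⦄, X ⊆ Y → r X ≤ r Y
  submodular : ∀ X Y : Finset S, r (X ∪ Y) + r (X ∩ Y) ≤ r X + r Y

/-- `B` is a basis of `T` in the matroid with rank function `M` : an independent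
subset of `T` of full rank in `T`. -/
def RankFn.IsBasisOf {S : Type*} [Fintype S] [DecidableEq S] (M : RankFn S)
    (B T : Finset S) : Prop :=
  B ⊆ T ∧ M.r B = B.card ∧ M.r B = M.r T

/-- A dyperedge `a = (Z, z)` enters `X` if its head `z` is in `X` and some tail
vertex lies outside `X`. -/
def dypEnters (a : Finset V × V) (X : Finset V) : Prop :=
  a.2 ∈ X ∧ (a.1 \ X).Nonempty

/-- The in-degree `d⁻_𝒜(X)` in a dypergraph. -/
def dypInDeg (𝒜 : Multiset (Finset V × V)) (X : Finset V) : ℕ :=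
  (𝒜.filter fun a => dypEnters a X).card

/-- A hyperedge `e` enters `X` if it meets both `X` and its complement. -/
def hypEnters (e X : Finset V) : Prop := (e ∩ X).Nonempty ∧ (e \ X).Nonempty

/-- `e_{ℰ∪𝒜}(𝒫)` for a mixed hypergraph: the number of hyperedges of `ℰ` and
dyperedges of `𝒜` entering at least one member of `P`. -/
def eMH (ℰ : Multiset (Finset V)) (𝒜 : Multiset (Finset V × V))
    (P : Finset (Finset V)) : ℕ :=
  (ℰ.filter fun e => ∃ X ∈ P, hypEnters e X).card +
  (𝒜.filter fun a => ∃ X ∈ P, dypEnters a X).card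

/-- `B` is obtained from the multiset `𝒵` of dyperedges by trimming each
dyperedge `(Z, z)` to an arc `(y, z)` with `y ∈ Z`. -/
def Trims (𝒵 : Multiset (Finset V × V)) (B : Multiset (V × V)) : Prop :=
  Multiset.Rel (fun a b => b.2 = a.2 ∧ b.1 ∈ a.1) 𝒵 B

/-- `𝒟` is an orientation of the multiset `ℰ` of hyperedges: each hyperedge `X`
is replaced by a dyperedge `(X − x, x)` for some `x ∈ X`. -/
def Orients (ℰ : Multiset (Finset V)) (𝒟 : Multiset (Finset V × V)) : Prop :=
  Multiset.Rel (fun e a => a.2 ∈ e ∧ a.1 = e.erase a.2) ℰ 𝒟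

/-- Auxiliary: the set `X_j`. -/
def Yset (A : Multiset (V × V)) {k : ℕ} (C : Fin k → Finset V) (X : Finset V)
    (j : Fin k) : Finset V :=
  (X ∩ C j) ∪
    (Finset.univ.filter fun i =>
        (X ∩ C i).Nonempty ∧ i ≠ j ∧ C i ⊆ PD A (C j)).biUnion
      fun i => PD A (C i)

/-- Auxiliary counting lemma: if each element satisfies at most one of the
predicates `p j` (over `j ∈ S`), and any such element satisfies `q`, then the
sum of filtered cardinalities is at most the `q`-filtered cardinality. -/
lemma countP_sum_le {ι α : Type*} (S : Finset ι) (p : ι → α → Prop) (q : α → Prop)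
    (B : Multiset α)
    (h1 : ∀ a ∈ B, ∀ j ∈ S, p j a → q a)
    (h2 : ∀ a ∈ B, ∀ j ∈ S, ∀ j' ∈ S, p j a → p j' a → j = j') :
    ∑ j ∈ S, (B.filter (fun a => p j a)).card ≤ (B.filter q).card := by
  classical
  induction B using Multiset.induction with
  | empty => simp
  | cons a B ih =>
    simp only [Multiset.filter_cons, Multiset.card_add, apply_ite Multiset.card,
      Multiset.card_singleton, Multiset.card_zero]
    rw [Finset.sum_add_distrib]
    have key : (∑ j ∈ S, if p j a then 1 else 0) ≤ (if q a then 1 else 0) := by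
      by_cases hq : q a
      · simp only [hq, if_true]
        calc (∑ j ∈ S, if p j a then 1 else 0)
            = (S.filter (fun j => p j a)).card := (Finset.card_filter _ _).symm
          _ ≤ 1 := by
              refine Finset.card_le_one.mpr ?_
              intro j hj j' hj'
              simp only [Finset.mem_filter] at hj hj'
              exact h2 a (Multiset.mem_cons_self a B) j hj.1 j' hj'.1 hj.2 hj'.2
      · have hall : ∀ j ∈ S, ¬ p j a := fun j hj hp =>
          hq (h1 a (Multiset.mem_cons_self a B) j hj hp)
        rw [Finset.sum_congr rfl (fun j hj => if_neg (hall j hj))]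
        simp
    exact add_le_add key (ih
      (fun b hb => h1 b (Multiset.mem_cons_of_mem hb))
      (fun b hb => h2 b (Multiset.mem_cons_of_mem hb)))

/-- Claim 1 of the paper: with `C 1, …, C k` the strongly connected components of
the digraph `D = (V, A)`, `X ⊆ V`, `J = {j : X ∩ C j ≠ ∅}` and
`X_j = (X ∩ C_j) ∪ ⋃ {P_D^{C_i} : i ∈ J − {j}, C_i ⊆ P_D^{C_j}}`, we have
`d⁻_A(X) ≥ Σ_{j ∈ J} d⁻_A(X_j)`. -/
theorem indeg_ge_sum_indeg_components
    (V : Type) [Fintype V] [DecidableEq V]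
    (A : Multiset (V × V)) (hA : ∀ a ∈ A, a.1 ≠ a.2)
    (k : ℕ) (C : Fin k → Finset V)
    (hscc : ∀ j, IsSCCD A (C j)) (hinj : Function.Injective C)
    (hcover : ∀ v : V, ∃ j, v ∈ C j)
    (X : Finset V) :
    ∑ j ∈ Finset.univ.filter (fun j => (X ∩ C j).Nonempty),
        inDeg A ((X ∩ C j) ∪
          (Finset.univ.filter fun i =>
              (X ∩ C i).Nonempty ∧ i ≠ j ∧ C i ⊆ PD A (C j)).biUnion
            fun i => PD A (C i))
      ≤ inDeg A X := by
  classical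
  have step : ∀ a ∈ A, Reaches A a.1 a.2 := fun a ha =>
    Relation.ReflTransGen.single (by rwa [Prod.mk.eta])
  have hPD_mem : ∀ (Y : Finset V) (u : V), u ∈ PD A Y ↔ ∃ v ∈ Y, Reaches A u v := by
    intro Y u; simp [PD]
  have hPD_closed : ∀ (Y : Finset V), ∀ a ∈ A, a.2 ∈ PD A Y → a.1 ∈ PD A Y := by
    intro Y a ha h2
    rw [hPD_mem] at h2 ⊢
    obtain ⟨v, hv, hr⟩ := h2
    exact ⟨v, hv, Relation.ReflTransGen.trans (step a ha) hr⟩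
  have hself : ∀ j, C j ⊆ PD A (C j) := by
    intro j v hv
    rw [hPD_mem]
    exact ⟨v, hv, Relation.ReflTransGen.refl⟩
  have hmut : ∀ j, ∀ u ∈ C j, ∀ w ∈ C j, Reaches A u w := by
    intro j u hu w hw
    obtain ⟨v, hv⟩ := hscc j
    rw [hv, Finset.mem_filter] at hu hw
    exact Relation.ReflTransGen.trans hu.2.1 hw.2.2
  have heq : ∀ i j : Fin k, ∀ v : V, v ∈ C i → v ∈ C j → i = j := by
    intro i j v hvi hvj
    apply hinj
    obtain ⟨wi, hwi⟩ := hscc i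
    obtain ⟨wj, hwj⟩ := hscc j
    have h1 := hvi; rw [hwi, Finset.mem_filter] at h1
    have h2 := hvj; rw [hwj, Finset.mem_filter] at h2
    rw [hwi, hwj]
    ext u
    simp only [Finset.mem_filter, Finset.mem_univ, true_and]
    constructor
    · rintro ⟨h3, h4⟩
      exact ⟨Relation.ReflTransGen.trans h3
          (Relation.ReflTransGen.trans h1.2.2 h2.2.1),
        Relation.ReflTransGen.trans h2.2.2
          (Relation.ReflTransGen.trans h1.2.1 h4)⟩
    · rintro ⟨h3, h4⟩
      exact ⟨Relation.ReflTransGen.trans h3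
          (Relation.ReflTransGen.trans h2.2.2 h1.2.1),
        Relation.ReflTransGen.trans h1.2.2
          (Relation.ReflTransGen.trans h2.2.1 h4)⟩
  have headX : ∀ a ∈ A, ∀ j, arcEnters a (Yset A C X j) → a.2 ∈ X ∩ C j := by
    intro a ha j hent
    have h2 := hent.1
    simp only [Yset, Finset.mem_union, Finset.mem_biUnion] at h2
    rcases h2 with h | h
    · exact h
    · exfalso
      obtain ⟨i, hi, hmem⟩ := h
      apply hent.2
      simp only [Yset, Finset.mem_union, Finset.mem_biUnion]
      exact Or.inr ⟨i, hi, hPD_closed _ a ha hmem⟩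
  have h1 : ∀ a ∈ A, ∀ j ∈ Finset.univ.filter (fun j => (X ∩ C j).Nonempty),
      arcEnters a (Yset A C X j) → arcEnters a X := by
    intro a ha j hj hent
    have hv := headX a ha j hent
    refine ⟨(Finset.mem_inter.mp hv).1, ?_⟩
    intro huX
    obtain ⟨i, hui⟩ := hcover a.1
    have hiJ : (X ∩ C i).Nonempty := ⟨a.1, Finset.mem_inter.mpr ⟨huX, hui⟩⟩
    have hij : i ≠ j := by
      rintro rfl
      exact hent.2 (Finset.mem_union_left _ (Finset.mem_inter.mpr ⟨huX, hui⟩))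
    have hsub : C i ⊆ PD A (C j) := by
      intro w hw
      rw [hPD_mem]
      exact ⟨a.2, (Finset.mem_inter.mp hv).2,
        Relation.ReflTransGen.trans (hmut i w hw a.1 hui) (step a ha)⟩
    apply hent.2
    simp only [Yset, Finset.mem_union, Finset.mem_biUnion]
    refine Or.inr ⟨i, ?_, hself i hui⟩
    simp only [Finset.mem_filter, Finset.mem_univ, true_and]
    exact ⟨hiJ, hij, hsub⟩
  have h2 : ∀ a ∈ A, ∀ j ∈ Finset.univ.filter (fun j => (X ∩ C j).Nonempty),
      ∀ j' ∈ Finset.univ.filter (fun j => (X ∩ C j).Nonempty),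
      arcEnters a (Yset A C X j) → arcEnters a (Yset A C X j') → j = j' := by
    intro a ha j _ j' _ hp hp'
    exact heq j j' a.2 (Finset.mem_inter.mp (headX a ha j hp)).2
      (Finset.mem_inter.mp (headX a ha j' hp')).2
  have := countP_sum_le (Finset.univ.filter fun j => (X ∩ C j).Nonempty)
    (fun j a => arcEnters a (Yset A C X j)) (fun a => arcEnters a X) A h1 h2
  simp only [inDeg, Yset] at this ⊢
  convert this
  congr!

end ArborPaper
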